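/- With τ = ⌈(8/p)(d + log b)⌉ and δ = 1/2, for b independent binomial processes X_i(τ) ~ Bin(τ, p), the probability that min_i X_i(τ) < d is at most e^{-d} ≤ e^{-1}. Consequently the expected time until all b branches of a star graph of depth d are fully infected is at most 8(d + log b)/(p(1 - e^{-1})). -/

import Mathlib

open MeasureTheory ProbabilityTheory


open Finset in
lemma sum_binom_tail_bound (p : ℝ) (hp0 : 0 < p) (hp1 : p ≤ 1) (b d τ : ℕ)
    (hb : 1 ≤ b) (hd : 1 ≤ d)
    (hτ1 : (8/p) * ((d : ℝ) + Real.log b) ≤ τ) (hdτ : d ≤ τ) :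
    (b:ℝ) * ∑ k ∈ range d, (τ.choose k : ℝ) * p ^ k * (1-p)^(τ-k)
      ≤ Real.exp (-(2*(d:ℝ))) := by
  have hq0 : (0:ℝ) ≤ 1 - p := by linarith
  have step1 : ∑ k ∈ range d, (τ.choose k : ℝ) * p ^ k * (1-p)^(τ-k)
      ≤ 2^d * ∑ k ∈ range (τ+1), (τ.choose k : ℝ) * (p/2) ^ k * (1-p)^(τ-k) := by
    calc ∑ k ∈ range d, (τ.choose k : ℝ) * p ^ k * (1-p)^(τ-k)
        ≤ ∑ k ∈ range d, 2^d * ((τ.choose k : ℝ) * (p/2) ^ k * (1-p)^(τ-k)) := by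
          refine Finset.sum_le_sum fun k hk => ?_
          have hk' : k < d := Finset.mem_range.1 hk
          have h1 : (p:ℝ)^k = 2^k * (p/2)^k := by
            rw [← mul_pow]; ring_nf
          have h2 : (2:ℝ)^k ≤ 2^d := pow_le_pow_right₀ (by norm_num) (by omega)
          have hC : (0:ℝ) ≤ (τ.choose k : ℝ) := by positivity
          have hq : (0:ℝ) ≤ (1-p)^(τ-k) := by positivity
          have hpk : (0:ℝ) ≤ (p/2)^k := by positivity
          rw [h1]
          nlinarith [mul_le_mul_of_nonneg_right (mul_le_mul_of_nonneg_left
            (mul_le_mul_of_nonneg_right h2 hpk) hC) hq]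
      _ = 2^d * ∑ k ∈ range d, (τ.choose k : ℝ) * (p/2) ^ k * (1-p)^(τ-k) := by
          rw [Finset.mul_sum]
      _ ≤ 2^d * ∑ k ∈ range (τ+1), (τ.choose k : ℝ) * (p/2) ^ k * (1-p)^(τ-k) := by
          refine mul_le_mul_of_nonneg_left ?_ (by positivity)
          refine Finset.sum_le_sum_of_subset_of_nonneg
            (Finset.range_subset_range.2 (by omega)) fun k _ _ => by positivity
  have step2 : ∑ k ∈ range (τ+1), (τ.choose k : ℝ) * (p/2) ^ k * (1-p)^(τ-k)
      = (1 - p/2)^τ := by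
    have := add_pow (p/2) (1-p) τ
    rw [show p/2 + (1-p) = 1 - p/2 by ring] at this
    rw [this]
    refine Finset.sum_congr rfl fun k _ => by ring
  have step3 : (1 - p/2)^τ ≤ Real.exp (-(p/2) * τ) := by
    have h1 : 1 - p/2 ≤ Real.exp (-(p/2)) := by
      have := Real.add_one_le_exp (-(p/2)); linarith
    calc (1 - p/2)^τ ≤ (Real.exp (-(p/2)))^τ :=
          pow_le_pow_left₀ (by linarith) h1 τ
      _ = Real.exp (-(p/2) * τ) := by
          rw [← Real.exp_nat_mul]; ring_nf
  set L := Real.log b with hL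
  have hL0 : 0 ≤ L := Real.log_nonneg (by exact_mod_cast hb)
  have hbL : (b:ℝ) = Real.exp L := by
    rw [hL, Real.exp_log]; positivity
  have h2d : (2:ℝ)^d = Real.exp (d * Real.log 2) := by
    rw [Real.exp_nat_mul, Real.exp_log] <;> norm_num
  have hpτ : 8 * ((d:ℝ) + L) ≤ p * τ := by
    have := mul_le_mul_of_nonneg_left hτ1 hp0.le
    calc 8 * ((d:ℝ) + L) = p * ((8/p) * ((d:ℝ) + L)) := by field_simp
      _ ≤ p * τ := this
  have hlog2 : Real.log 2 ≤ 1 := by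
    nlinarith [Real.log_two_lt_d9]
  have hb0 : (0:ℝ) ≤ b := by positivity
  have h2p : (0:ℝ) ≤ (2:ℝ)^d := by positivity
  calc (b:ℝ) * ∑ k ∈ range d, (τ.choose k : ℝ) * p ^ k * (1-p)^(τ-k)
      ≤ (b:ℝ) * (2^d * (1 - p/2)^τ) := by
        rw [← step2]; gcongr
    _ ≤ (b:ℝ) * (2^d * Real.exp (-(p/2) * τ)) := by gcongr
    _ = Real.exp (L + d * Real.log 2 + (-(p/2) * τ)) := by
        rw [hbL, h2d, ← Real.exp_add, ← Real.exp_add]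
        ring_nf
    _ ≤ Real.exp (-(2*(d:ℝ))) := by
        apply Real.exp_le_exp.2
        have hd1 : (1:ℝ) ≤ d := by exact_mod_cast hd
        nlinarith

set_option maxHeartbeats 1600000 in
/-- Star graph with `b` branches of depth `d`: each branch's infection count
`X i · t ~ Bin(t, p)` advances independently. With `τ = ⌈(8/p)(d + log b)⌉`,
`Pr[min_i X i τ < d] ≤ e^{-d} ≤ e^{-1}`, and the expected time until all branches
are fully infected is at most `8(d + log b)/(p(1 - e⁻¹))`. -/
theorem star_graph_propagation {Ω : Type*} [MeasurableSpace Ω]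
    (μ : Measure Ω) [IsProbabilityMeasure μ]
    (b d : ℕ) (hb : 1 ≤ b) (hd : 1 ≤ d) (p : ℝ) (hp0 : 0 < p) (hp1 : p ≤ 1)
    (X : Fin b → Ω → ℕ → ℕ)
    (hindep : iIndepFun X μ)
    (hmono : ∀ i ω, Monotone (X i ω))
    (hbinom : ∀ i, ∀ t k : ℕ,
      (μ {ω | X i ω t = k}).toReal = (t.choose k : ℝ) * p ^ k * (1 - p) ^ (t - k))
    (hsub : ∀ t k : ℕ, 0 < t → 0 < k →
      μ {ω | ¬ ∀ i, d ≤ X i ω (t + k)} ≤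
        μ {ω | ¬ ∀ i, d ≤ X i ω t} * μ {ω | ¬ ∀ i, d ≤ X i ω k})
    (hhit : ∀ ω, ∃ t, ∀ i, d ≤ X i ω t)
    (hint : Integrable (fun ω => ((sInf {t : ℕ | ∀ i, d ≤ X i ω t} : ℕ) : ℝ)) μ) :
    (μ {ω | ∃ i, X i ω ⌈(8 / p) * ((d : ℝ) + Real.log b)⌉₊ < d}).toReal ≤
        Real.exp (-(d : ℝ)) ∧
    Real.exp (-(d : ℝ)) ≤ Real.exp (-1) ∧
    ∫ ω, ((sInf {t : ℕ | ∀ i, d ≤ X i ω t} : ℕ) : ℝ) ∂μ ≤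
      8 * ((d : ℝ) + Real.log b) / (p * (1 - Real.exp (-1))) := by
  classical
  set L := Real.log (b : ℝ) with hLdef
  have hL0 : 0 ≤ L := Real.log_nonneg (by exact_mod_cast hb)
  set c : ℝ := 8 / p * ((d : ℝ) + L) with hcdef
  set τ : ℕ := ⌈c⌉₊ with hτdef
  have hd1 : (1:ℝ) ≤ (d:ℝ) := by exact_mod_cast hd
  have h8p : (8:ℝ) ≤ 8 / p := by
    rw [le_div_iff₀ hp0]; nlinarith
  have hc8 : 8 ≤ c := by
    have : (1:ℝ) ≤ (d:ℝ) + L := by linarith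
    nlinarith
  have hcτ : c ≤ (τ:ℝ) := Nat.le_ceil c
  have hτc1 : (τ:ℝ) ≤ c + 1 := (Nat.ceil_lt_add_one (by linarith)).le
  have hdτ : d ≤ τ := by
    have : (d:ℝ) ≤ (τ:ℝ) := by nlinarith
    exact_mod_cast this
  have hτpos : 0 < τ := by
    have : (0:ℝ) < (τ:ℝ) := by linarith
    exact_mod_cast this
  -- key probability bound
  have hQmain : μ {ω | ∃ i, X i ω τ < d} ≤ ENNReal.ofReal (Real.exp (-(2*(d:ℝ)))) := by
    have hbig : (b:ℝ) * ∑ k ∈ Finset.range d, (τ.choose k : ℝ) * p ^ k * (1-p)^(τ-k)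
        ≤ Real.exp (-(2*(d:ℝ))) :=
      sum_binom_tail_bound p hp0 hp1 b d τ hb hd (by rw [← hcdef]; exact hcτ) hdτ
    calc μ {ω | ∃ i, X i ω τ < d} ≤ ∑ i : Fin b, μ {ω | X i ω τ < d} := by
          refine le_trans (measure_mono ?_) (measure_iUnion_fintype_le _ _)
          rintro ω ⟨i, hi⟩
          exact Set.mem_iUnion.2 ⟨i, hi⟩
      _ ≤ ∑ i : Fin b, ∑ k ∈ Finset.range d, μ {ω | X i ω τ = k} := by
          refine Finset.sum_le_sum fun i _ => ?_
          refine le_trans (measure_mono ?_) (measure_biUnion_finset_le _ _)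
          intro ω hω
          exact Set.mem_iUnion₂.2 ⟨X i ω τ, Finset.mem_range.2 hω, rfl⟩
      _ = ∑ i : Fin b, ∑ k ∈ Finset.range d,
            ENNReal.ofReal ((τ.choose k : ℝ) * p ^ k * (1-p)^(τ-k)) := by
          refine Finset.sum_congr rfl fun i _ => Finset.sum_congr rfl fun k _ => ?_
          rw [← hbinom i τ k, ENNReal.ofReal_toReal (measure_ne_top μ _)]
      _ = ENNReal.ofReal ((b:ℝ) * ∑ k ∈ Finset.range d,
            (τ.choose k : ℝ) * p ^ k * (1-p)^(τ-k)) := by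
          have hnn : ∀ k ∈ Finset.range d, (0:ℝ) ≤ (τ.choose k : ℝ) * p ^ k * (1-p)^(τ-k) := by
            intro k _
            have : (0:ℝ) ≤ 1 - p := by linarith
            positivity
          rw [Finset.sum_const, ← ENNReal.ofReal_sum_of_nonneg hnn]
          simp only [Finset.card_univ, Fintype.card_fin, nsmul_eq_mul]
          rw [← ENNReal.ofReal_natCast b, ← ENNReal.ofReal_mul (by positivity)]
      _ ≤ ENNReal.ofReal (Real.exp (-(2*(d:ℝ)))) := ENNReal.ofReal_le_ofReal hbig
  have part1 : (μ {ω | ∃ i, X i ω τ < d}).toReal ≤ Real.exp (-(d:ℝ)) := by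
    refine le_trans (ENNReal.toReal_le_of_le_ofReal (Real.exp_nonneg _) hQmain) ?_
    exact Real.exp_le_exp.2 (by nlinarith)
  refine ⟨part1, Real.exp_le_exp.2 (by linarith), ?_⟩
  -- Part 3: hitting time
  set T : Ω → ℕ := fun ω => sInf {t | ∀ i, d ≤ X i ω t} with hTdef
  have hTle : ∀ ω s, T ω ≤ s ↔ ∀ i, d ≤ X i ω s := by
    intro ω s
    constructor
    · intro h i
      have hmem : T ω ∈ {t | ∀ i, d ≤ X i ω t} := Nat.sInf_mem (hhit ω)
      exact le_trans (hmem i) (hmono i ω h)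
    · intro h
      exact Nat.sInf_le h
  set r : ℕ → ENNReal := fun s => μ {ω | ¬ ∀ i, d ≤ X i ω s} with hrdef
  have hset : ∀ s : ℕ, {ω | s < T ω} = {ω | ¬ ∀ i, d ≤ X i ω s} := by
    intro s
    ext ω
    simp only [Set.mem_setOf_eq, ← hTle ω s, not_le]
  have hr_anti : ∀ s t : ℕ, s ≤ t → r t ≤ r s := by
    intro s t hst
    refine measure_mono fun ω hω hall => ?_
    exact hω fun i => le_trans (hall i) (hmono i ω hst)
  set Q : ENNReal := r τ with hQdef
  have hrn : ∀ n : ℕ, r ((n+1) * τ) ≤ Q^(n+1) := by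
    intro n
    induction n with
    | zero => simp [hQdef]
    | succ n ih =>
      have h1 : (n+2) * τ = (n+1) * τ + τ := by ring
      calc r ((n+2) * τ) = μ {ω | ¬ ∀ i, d ≤ X i ω ((n+1) * τ + τ)} := by rw [hrdef, h1]
        _ ≤ μ {ω | ¬ ∀ i, d ≤ X i ω ((n+1) * τ)} * μ {ω | ¬ ∀ i, d ≤ X i ω τ} :=
            hsub ((n+1) * τ) τ (by positivity) hτpos
        _ = r ((n+1) * τ) * Q := rfl
        _ ≤ Q^(n+1) * Q := mul_le_mul_left ih Q
        _ = Q^(n+2) := by ring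
  have hrQ : ∀ s : ℕ, r s ≤ Q ^ (s / τ) := by
    intro s
    rcases Nat.eq_zero_or_pos (s / τ) with h | h
    · rw [h, pow_zero]
      exact prob_le_one
    · obtain ⟨n, hn⟩ : ∃ n, s / τ = n + 1 := ⟨s / τ - 1, by omega⟩
      calc r s ≤ r ((s / τ) * τ) := hr_anti _ _ (Nat.div_mul_le_self s τ)
        _ = r ((n+1) * τ) := by rw [hn]
        _ ≤ Q^(n+1) := hrn n
        _ = Q^(s/τ) := by rw [hn]
  have hTmeas : AEStronglyMeasurable (fun ω => ((T ω : ℕ) : ℝ)) μ := hint.aestronglyMeasurable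
  have hnull : ∀ s : ℕ, NullMeasurableSet {ω | s < T ω} μ := by
    intro s
    have heq : {ω | s < T ω} = {ω | ((s:ℕ):ℝ) < ((T ω : ℕ):ℝ)} := by
      ext ω; simp [Nat.cast_lt]
    rw [heq]
    exact nullMeasurableSet_lt aemeasurable_const hTmeas.aemeasurable
  have hlayer : ∫⁻ ω, (T ω : ENNReal) ∂μ = ∑' s : ℕ, μ {ω | s < T ω} := by
    have key : ∀ ω, (T ω : ENNReal)
        = ∑' s : ℕ, Set.indicator {ω' | s < T ω'} (fun _ => (1 : ENNReal)) ω := by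
      intro ω
      rw [tsum_eq_sum (s := Finset.range (T ω))
        (fun s hs => Set.indicator_of_notMem (by simpa using Finset.mem_range.not.1 hs) _)]
      have h1 : ∀ s ∈ Finset.range (T ω),
          ({ω' | s < T ω'}.indicator (fun _ => (1 : ENNReal)) ω) = 1 :=
        fun s hs => Set.indicator_of_mem (show ω ∈ {ω' | s < T ω'} from Finset.mem_range.1 hs) _
      rw [Finset.sum_congr rfl h1]
      simp
    calc ∫⁻ ω, (T ω : ENNReal) ∂μ
        = ∫⁻ ω, ∑' s : ℕ, Set.indicator {ω' | s < T ω'} (fun _ => (1 : ENNReal)) ω ∂μ := by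
          exact lintegral_congr key
      _ = ∑' s : ℕ, ∫⁻ ω, Set.indicator {ω' | s < T ω'} (fun _ => (1 : ENNReal)) ω ∂μ :=
          lintegral_tsum fun s => (aemeasurable_indicator_iff₀ (hnull s)).mpr aemeasurable_const
      _ = ∑' s : ℕ, μ {ω | s < T ω} := by
          refine tsum_congr fun s => ?_
          exact lintegral_indicator_one₀ (hnull s)
  have hQ2 : Q ≤ ENNReal.ofReal (Real.exp (-2)) := by
    have heq : {ω | ¬ ∀ i, d ≤ X i ω τ} = {ω | ∃ i, X i ω τ < d} := by
      ext ω; simp [not_forall, not_le]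
    calc Q = μ {ω | ∃ i, X i ω τ < d} := by rw [hQdef, hrdef]; exact congrArg μ heq
      _ ≤ ENNReal.ofReal (Real.exp (-(2*(d:ℝ)))) := hQmain
      _ ≤ ENNReal.ofReal (Real.exp (-2)) :=
          ENNReal.ofReal_le_ofReal (Real.exp_le_exp.2 (by nlinarith))
  haveI : NeZero τ := ⟨hτpos.ne'⟩
  have hsum : ∑' s : ℕ, r s ≤ (τ : ENNReal) * (1 - Q)⁻¹ := by
    calc ∑' s : ℕ, r s ≤ ∑' s : ℕ, Q ^ (s / τ) := ENNReal.tsum_le_tsum hrQ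
      _ = ∑' x : ℕ × Fin τ, Q ^ (x.1) := by
          rw [← Equiv.tsum_eq (Nat.divModEquiv τ) (fun x : ℕ × Fin τ => Q ^ x.1)]
          rfl
      _ = ∑' n : ℕ, ∑' _j : Fin τ, Q ^ n := ENNReal.tsum_prod (f := fun n (_ : Fin τ) => Q ^ n)
      _ = ∑' n : ℕ, (τ : ENNReal) * Q ^ n := by
          refine tsum_congr fun n => ?_
          rw [tsum_fintype]
          simp [Finset.sum_const, nsmul_eq_mul]
      _ = (τ : ENNReal) * ∑' n : ℕ, Q ^ n := ENNReal.tsum_mul_left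
      _ = (τ : ENNReal) * (1 - Q)⁻¹ := by rw [ENNReal.tsum_geometric]
  -- numeric facts about exp
  have hE1 : Real.exp (-1) = (Real.exp 1)⁻¹ := Real.exp_neg 1
  have hE2 : Real.exp (-2) = (Real.exp 1)⁻¹ * (Real.exp 1)⁻¹ := by
    rw [← Real.exp_neg, ← Real.exp_add]; norm_num
  have hEgt : (2.7182818283 : ℝ) < Real.exp 1 := Real.exp_one_gt_d9
  have hElt : Real.exp 1 < 2.7182818286 := Real.exp_one_lt_d9
  have hu1 : Real.exp (-1) < 1 := by
    rw [hE1, inv_lt_one_iff₀]; right; linarith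
  have hu0 : 0 < Real.exp (-1) := Real.exp_pos _
  have he2lt : Real.exp (-2) < 1 := by nlinarith
  have he2pos : 0 < 1 - Real.exp (-2) := by linarith
  have hbound : (τ : ENNReal) * (1 - Q)⁻¹
      ≤ ENNReal.ofReal (8 * ((d:ℝ) + L) / (p * (1 - Real.exp (-1)))) := by
    have hinv : (1 - Q)⁻¹ ≤ ENNReal.ofReal ((1 - Real.exp (-2))⁻¹) := by
      rw [ENNReal.ofReal_inv_of_pos he2pos]
      refine ENNReal.inv_le_inv.2 ?_
      have : ENNReal.ofReal (1 - Real.exp (-2))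
          = 1 - ENNReal.ofReal (Real.exp (-2)) := by
        rw [ENNReal.ofReal_sub _ (Real.exp_nonneg _), ENNReal.ofReal_one]
      rw [this]
      exact tsub_le_tsub_left hQ2 1
    calc (τ : ENNReal) * (1 - Q)⁻¹
        ≤ ENNReal.ofReal (τ : ℝ) * ENNReal.ofReal ((1 - Real.exp (-2))⁻¹) := by
          rw [ENNReal.ofReal_natCast]
          exact mul_le_mul_right hinv _
      _ = ENNReal.ofReal ((τ:ℝ) * (1 - Real.exp (-2))⁻¹) :=
          (ENNReal.ofReal_mul (by positivity)).symm
      _ ≤ ENNReal.ofReal (8 * ((d:ℝ) + L) / (p * (1 - Real.exp (-1)))) := by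
          refine ENNReal.ofReal_le_ofReal ?_
          have hc_eq : 8 * ((d:ℝ) + L) / (p * (1 - Real.exp (-1))) = c / (1 - Real.exp (-1)) := by
            rw [hcdef]; field_simp
          rw [hc_eq]
          have h1u : 0 < 1 - Real.exp (-1) := by linarith
          have huE : Real.exp (-1) * Real.exp 1 = 1 := by
            rw [← Real.exp_add]; norm_num
          have hE2' : Real.exp (-2) = Real.exp (-1) * Real.exp (-1) := by
            rw [← Real.exp_add]; norm_num
          rw [div_eq_mul_inv, hE2']
          set u := Real.exp (-1) with hu
          have h1uu : 0 < 1 - u * u := by nlinarith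
          have hkey : (τ:ℝ) * (1 - u) ≤ c * (1 - u * u) := by
            have hcu : 1 ≤ c * u := by nlinarith
            nlinarith
          calc (τ:ℝ) * (1 - u*u)⁻¹ = (τ:ℝ) / (1 - u*u) := by rw [div_eq_mul_inv]
            _ ≤ c / (1 - u) := by
                rw [div_le_div_iff₀ h1uu h1u]
                nlinarith
            _ = c * (1 - u)⁻¹ := by rw [div_eq_mul_inv]
  have hu1' : (0:ℝ) < 1 - Real.exp (-1) := by linarith
  have hintg : ∫ ω, ((T ω : ℕ) : ℝ) ∂μ = (∫⁻ ω, (T ω : ENNReal) ∂μ).toReal := by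
    rw [integral_eq_lintegral_of_nonneg_ae
      (Filter.Eventually.of_forall fun ω => by positivity) hTmeas]
    congr 1
    exact lintegral_congr fun ω => ENNReal.ofReal_natCast _
  show ∫ ω, ((T ω : ℕ) : ℝ) ∂μ ≤ 8 * ((d:ℝ) + L) / (p * (1 - Real.exp (-1)))
  rw [hintg]
  refine ENNReal.toReal_le_of_le_ofReal
    (div_nonneg (by positivity) (by nlinarith)) ?_
  rw [hlayer]
  have hre : ∑' s : ℕ, μ {ω | s < T ω} = ∑' s : ℕ, r s :=
    tsum_congr fun s => by rw [hset s]
  rw [hre]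
  exact le_trans hsum hbound
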